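/- (Quadratic flux: multi-dimensional component of recovered flux) Let x ∈ ℝ. For every t > 0, ∫₀ᵗ ∫_ℝ (2√s/√π)·(y² − x²) · exp(−(x−y)²/(4(t−s)))/(4π·(t−s)²) dy ds = t. Combined with the one-dimensional component x² + t, the temperature-to-flux formula q = q_{1d} − q_{md} recovers the assumed time-independent quadratic flux q(t,x) = x² exactly. -/

import Mathlib

open Real MeasureTheory Set

lemma odd_gauss {b : ℝ} : ∫ z : ℝ, z * Real.exp (-b * z ^ 2) = 0 := by
  have h := MeasureTheory.integral_neg_eq_self (fun z : ℝ => z * Real.exp (-b * z ^ 2)) volume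
  simp only [neg_mul, neg_sq, neg_neg] at h
  have : ∫ z : ℝ, -(z * Real.exp (-b * z ^ 2)) = ∫ z : ℝ, z * Real.exp (-b * z ^ 2) := by
    simpa using h
  rw [integral_neg] at this
  linarith

lemma sq_gauss {b : ℝ} (hb : 0 < b) :
    ∫ z : ℝ, z ^ 2 * Real.exp (-b * z ^ 2) = Real.sqrt π / (2 * b * Real.sqrt b) := by
  have h1 : ∫ z : ℝ, z ^ 2 * Real.exp (-b * z ^ 2)
      = 2 * ∫ z in Ioi (0:ℝ), z ^ 2 * Real.exp (-b * z ^ 2) := by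
    rw [← integral_comp_abs (f := fun z => z ^ 2 * Real.exp (-b * z ^ 2))]
    simp [sq_abs]
  have h2 : ∫ z in Ioi (0:ℝ), z ^ 2 * Real.exp (-b * z ^ 2)
      = b ^ (-(2+1)/2 : ℝ) * (1 / 2) * Real.Gamma ((2 + 1) / 2) := by
    rw [← integral_rpow_mul_exp_neg_mul_rpow two_pos (by norm_num) hb]
    refine setIntegral_congr_fun measurableSet_Ioi (fun z hz => ?_)
    norm_num [show ((2:ℝ) = ((2:ℕ):ℝ)) by norm_num, Real.rpow_natCast]
  have hG : Real.Gamma ((2 + 1) / 2 : ℝ) = Real.sqrt π / 2 := by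
    rw [show ((2 + 1) / 2 : ℝ) = 1/2 + 1 by norm_num, Real.Gamma_add_one (by norm_num),
      Real.Gamma_one_half_eq]
    ring
  have hb32 : b ^ (-(2+1)/2 : ℝ) = 1 / (b * Real.sqrt b) := by
    rw [show (-(2+1)/2 : ℝ) = -(1 + 1/2) by norm_num, Real.rpow_neg hb.le,
      Real.rpow_add hb, Real.rpow_one, ← Real.sqrt_eq_rpow]
    field_simp
  rw [h1, h2, hG, hb32]
  field_simp

lemma inner_int (A x a : ℝ) (ha : 0 < a) :
    ∫ y : ℝ, A * (y ^ 2 - x ^ 2) * Real.exp (-(x - y) ^ 2 / (4 * a)) / (4 * π * a ^ 2)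
      = A / (Real.sqrt π * Real.sqrt a) := by
  set b : ℝ := 1 / (4 * a) with hbdef
  have hb : 0 < b := by positivity
  have key : ∀ y : ℝ,
      A * (y ^ 2 - x ^ 2) * Real.exp (-(x - y) ^ 2 / (4 * a)) / (4 * π * a ^ 2)
      = (A / (4 * π * a ^ 2)) * ((y - x) ^ 2 * Real.exp (-b * (y - x) ^ 2))
        + (A * (2 * x) / (4 * π * a ^ 2)) * ((y - x) * Real.exp (-b * (y - x) ^ 2)) := by
    intro y
    have he : -(x - y) ^ 2 / (4 * a) = -b * (y - x) ^ 2 := by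
      rw [hbdef]; field_simp; ring
    rw [he]; ring
  have hi2 : Integrable (fun z : ℝ => z ^ 2 * Real.exp (-b * z ^ 2)) := by
    have := integrable_rpow_mul_exp_neg_mul_sq hb (s := 2) (by norm_num)
    refine this.congr (Filter.Eventually.of_forall fun z => ?_)
    norm_num [show ((2:ℝ) = ((2:ℕ):ℝ)) by norm_num, Real.rpow_natCast]
  have hi1 : Integrable (fun z : ℝ => z * Real.exp (-b * z ^ 2)) :=
    integrable_mul_exp_neg_mul_sq hb
  have hI2 : Integrable (fun y : ℝ => (y - x) ^ 2 * Real.exp (-b * (y - x) ^ 2)) :=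
    hi2.comp_sub_right x
  have hI1 : Integrable (fun y : ℝ => (y - x) * Real.exp (-b * (y - x) ^ 2)) :=
    hi1.comp_sub_right x
  calc ∫ y : ℝ, A * (y ^ 2 - x ^ 2) * Real.exp (-(x - y) ^ 2 / (4 * a)) / (4 * π * a ^ 2)
      = ∫ y : ℝ, (A / (4 * π * a ^ 2)) * ((y - x) ^ 2 * Real.exp (-b * (y - x) ^ 2))
        + (A * (2 * x) / (4 * π * a ^ 2)) * ((y - x) * Real.exp (-b * (y - x) ^ 2)) := by
        exact congrArg _ (funext fun y => key y)
    _ = ((A / (4 * π * a ^ 2)) * ∫ y : ℝ, ((y - x) ^ 2 * Real.exp (-b * (y - x) ^ 2)))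
        + ((A * (2 * x) / (4 * π * a ^ 2)) * ∫ y : ℝ, ((y - x) * Real.exp (-b * (y - x) ^ 2))) := by
        rw [integral_add (hI2.const_mul _) (hI1.const_mul _), integral_const_mul,
          integral_const_mul]
    _ = ((A / (4 * π * a ^ 2)) * ∫ z : ℝ, (z ^ 2 * Real.exp (-b * z ^ 2)))
        + ((A * (2 * x) / (4 * π * a ^ 2)) * ∫ z : ℝ, (z * Real.exp (-b * z ^ 2))) := by
        rw [integral_sub_right_eq_self (fun z : ℝ => z ^ 2 * Real.exp (-b * z ^ 2)) x,
          integral_sub_right_eq_self (fun z : ℝ => z * Real.exp (-b * z ^ 2)) x]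
    _ = (A / (4 * π * a ^ 2)) * (Real.sqrt π / (2 * b * Real.sqrt b)) := by
        rw [sq_gauss hb, odd_gauss]; ring
    _ = A / (Real.sqrt π * Real.sqrt a) := by
        have hsb : Real.sqrt b = 1 / (2 * Real.sqrt a) := by
          rw [hbdef, show (4 : ℝ) * a = 2 ^ 2 * a by ring, one_div, Real.sqrt_inv,
            Real.sqrt_mul (by positivity), Real.sqrt_sq (by norm_num)]
          ring
        have hsa : Real.sqrt a > 0 := Real.sqrt_pos.mpr ha
        have hsp : Real.sqrt π > 0 := Real.sqrt_pos.mpr pi_pos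
        have hpi : Real.sqrt π * Real.sqrt π = π := Real.mul_self_sqrt pi_pos.le
        have haa : Real.sqrt a * Real.sqrt a = a := Real.mul_self_sqrt ha.le
        rw [hbdef, hsb]
        field_simp
        linear_combination (A * (Real.sqrt a * Real.sqrt a)) * hpi
          + (A * π) * haa

lemma outer_int {t : ℝ} (ht : 0 < t) :
    ∫ s in Ioo (0:ℝ) t,
        2 * Real.sqrt s / Real.sqrt π / (Real.sqrt π * Real.sqrt (t - s)) = t := by
  set F : ℝ → ℝ := fun s =>
    2 / π * (t * Real.arcsin (Real.sqrt (s / t)) - Real.sqrt s * Real.sqrt (t - s)) with hF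
  have hsp : (0:ℝ) < Real.sqrt π := Real.sqrt_pos.mpr pi_pos
  have hpi : Real.sqrt π * Real.sqrt π = π := Real.mul_self_sqrt pi_pos.le
  have hderiv : ∀ s ∈ Ioo (0:ℝ) t,
      HasDerivAt F (2 * Real.sqrt s / Real.sqrt π / (Real.sqrt π * Real.sqrt (t - s))) s := by
    intro s hs
    obtain ⟨hs0, hst⟩ := hs
    have hts : 0 < t - s := by linarith
    have hss : (0:ℝ) < Real.sqrt s := Real.sqrt_pos.mpr hs0
    have hsts : (0:ℝ) < Real.sqrt (t - s) := Real.sqrt_pos.mpr hts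
    have hstt : (0:ℝ) < Real.sqrt t := Real.sqrt_pos.mpr ht
    have hdivpos : 0 < s / t := div_pos hs0 ht
    have hdivlt : s / t < 1 := (div_lt_one ht).mpr hst
    have hu1 : Real.sqrt (s / t) < 1 := by
      rw [show (1:ℝ) = Real.sqrt 1 by simp]
      exact Real.sqrt_lt_sqrt hdivpos.le (by simpa using hdivlt)
    have hune1 : Real.sqrt (s / t) ≠ 1 := ne_of_lt hu1
    have hunem1 : Real.sqrt (s / t) ≠ -1 := by
      have := Real.sqrt_nonneg (s / t); intro h; rw [h] at this; linarith
    have h1 : HasDerivAt (fun s : ℝ => s / t) (1 / t) s := by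
      simpa using (hasDerivAt_id s).div_const t
    have h2 : HasDerivAt (fun s : ℝ => Real.sqrt (s / t))
        (1 / (2 * Real.sqrt (s / t)) * (1 / t)) s :=
      (Real.hasDerivAt_sqrt hdivpos.ne').comp s h1
    have h3 : HasDerivAt (fun s : ℝ => Real.arcsin (Real.sqrt (s / t)))
        (1 / Real.sqrt (1 - Real.sqrt (s / t) ^ 2) * (1 / (2 * Real.sqrt (s / t)) * (1 / t)))
        s := HasDerivAt.comp s (Real.hasDerivAt_arcsin hunem1 hune1) h2
    have h5 : HasDerivAt (fun s : ℝ => Real.sqrt (t - s))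
        (1 / (2 * Real.sqrt (t - s)) * (0 - 1)) s :=
      (Real.hasDerivAt_sqrt hts.ne').comp s ((hasDerivAt_const s t).sub (hasDerivAt_id s))
    have h6 : HasDerivAt (fun s : ℝ => Real.sqrt s * Real.sqrt (t - s))
        (1 / (2 * Real.sqrt s) * Real.sqrt (t - s)
          + Real.sqrt s * (1 / (2 * Real.sqrt (t - s)) * (0 - 1))) s :=
      (Real.hasDerivAt_sqrt hs0.ne').mul h5
    have H : HasDerivAt F
        (2 / π * (t * (1 / Real.sqrt (1 - Real.sqrt (s / t) ^ 2)
            * (1 / (2 * Real.sqrt (s / t)) * (1 / t)))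
          - (1 / (2 * Real.sqrt s) * Real.sqrt (t - s)
            + Real.sqrt s * (1 / (2 * Real.sqrt (t - s)) * (0 - 1))))) s :=
      ((h3.const_mul t).sub h6).const_mul (2 / π)
    have heq : 2 / π * (t * (1 / Real.sqrt (1 - Real.sqrt (s / t) ^ 2)
            * (1 / (2 * Real.sqrt (s / t)) * (1 / t)))
          - (1 / (2 * Real.sqrt s) * Real.sqrt (t - s)
            + Real.sqrt s * (1 / (2 * Real.sqrt (t - s)) * (0 - 1))))
        = 2 * Real.sqrt s / Real.sqrt π / (Real.sqrt π * Real.sqrt (t - s)) := by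
      have e1 : Real.sqrt (s / t) = Real.sqrt s / Real.sqrt t := Real.sqrt_div hs0.le t
      have e2 : 1 - Real.sqrt (s / t) ^ 2 = (t - s) / t := by
        rw [Real.sq_sqrt hdivpos.le]; field_simp
      have e3 : Real.sqrt ((t - s) / t) = Real.sqrt (t - s) / Real.sqrt t :=
        Real.sqrt_div hts.le t
      rw [e2, e3, e1]
      have hsst : Real.sqrt s * Real.sqrt s = s := Real.mul_self_sqrt hs0.le
      have hstst : Real.sqrt (t - s) * Real.sqrt (t - s) = t - s := Real.mul_self_sqrt hts.le
      have httt : Real.sqrt t * Real.sqrt t = t := Real.mul_self_sqrt ht.le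
      field_simp
      ring_nf
      linear_combination (Real.sqrt t ^ 2 - Real.sqrt (t - s) ^ 2 + Real.sqrt s ^ 2) * hpi
        + π * httt - π * hstst - π * hsst
    exact heq ▸ H
  have hint : IntervalIntegrable
      (fun s => 2 * Real.sqrt s / Real.sqrt π / (Real.sqrt π * Real.sqrt (t - s)))
      volume 0 t := by
    have base : IntervalIntegrable (fun u : ℝ => u ^ (-(1:ℝ)/2)) volume 0 t :=
      intervalIntegral.intervalIntegrable_rpow' (by norm_num)
    have comp : IntervalIntegrable (fun s : ℝ => (t - s) ^ (-(1:ℝ)/2)) volume 0 t := by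
      have := base.comp_sub_left t
      simpa using this.symm
    have mul : IntervalIntegrable
        (fun s : ℝ => (2 * Real.sqrt s / Real.sqrt π / Real.sqrt π) * (t - s) ^ (-(1:ℝ)/2))
        volume 0 t := by
      refine comp.continuousOn_mul ?_
      fun_prop
    rw [intervalIntegrable_iff_integrableOn_Ioc_of_le ht.le] at mul ⊢
    refine mul.congr_fun (fun s hs => ?_) measurableSet_Ioc
    have hts : 0 ≤ t - s := by linarith [hs.2]
    have hr : (t - s) ^ (-(1:ℝ)/2) = (Real.sqrt (t - s))⁻¹ := by
      rw [show (-(1:ℝ)/2) = -(1/2:ℝ) by norm_num, Real.rpow_neg hts, ← Real.sqrt_eq_rpow]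
    beta_reduce
    rw [hr, ← div_div]
    simp [div_eq_mul_inv]
  have hcont : Continuous F := by
    apply Continuous.mul continuous_const
    exact ((continuous_const.mul (Real.continuous_arcsin.comp
      ((Real.continuous_sqrt.comp (continuous_id.div_const t))))).sub
      (Real.continuous_sqrt.mul (Real.continuous_sqrt.comp (continuous_const.sub continuous_id))))
  have ha : Filter.Tendsto F (nhdsWithin 0 (Ioi 0)) (nhds 0) := by
    have h0 : F 0 = 0 := by simp [hF]
    have h2 := (hcont.tendsto (0:ℝ)).mono_left (nhdsWithin_le_nhds (s := Ioi (0:ℝ)))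
    rwa [h0] at h2
  have hb : Filter.Tendsto F (nhdsWithin t (Iio t)) (nhds t) := by
    have h1 : F t = t := by
      simp only [hF, div_self ht.ne', Real.sqrt_one, Real.arcsin_one, sub_self,
        Real.sqrt_zero, mul_zero, sub_zero]
      field_simp
    have h2 := (hcont.tendsto t).mono_left (nhdsWithin_le_nhds (s := Iio t))
    rwa [h1] at h2
  have := intervalIntegral.integral_eq_sub_of_hasDerivAt_of_tendsto ht hderiv hint ha hb
  rw [intervalIntegral.integral_of_le ht.le, integral_Ioc_eq_integral_Ioo] at this
  rw [this]; ring

/-- (Quadratic flux: multi-dimensional component of recovered flux) The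
multi-dimensional component of the temperature-to-flux formula, applied to the
temperature differences `g(s,y) − g(s,x) = (2√s/√π)(y² − x²)` produced by the
quadratic flux `q = y²` on the half-plane, equals `t`. -/
theorem quadratic_flux_multi_dimensional_component (x : ℝ) :
    ∀ t : ℝ, 0 < t →
      (∫ s in Ioo (0:ℝ) t, ∫ y : ℝ,
          2 * Real.sqrt s / Real.sqrt π * (y ^ 2 - x ^ 2)
            * Real.exp (-(x - y) ^ 2 / (4 * (t - s))) / (4 * π * (t - s) ^ 2))
        = t := by
  intro t ht
  have hcong : ∀ s ∈ Ioo (0:ℝ) t,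
      (∫ y : ℝ, 2 * Real.sqrt s / Real.sqrt π * (y ^ 2 - x ^ 2)
          * Real.exp (-(x - y) ^ 2 / (4 * (t - s))) / (4 * π * (t - s) ^ 2))
        = 2 * Real.sqrt s / Real.sqrt π / (Real.sqrt π * Real.sqrt (t - s)) := by
    intro s hs
    exact inner_int (2 * Real.sqrt s / Real.sqrt π) x (t - s) (by linarith [hs.2])
  rw [setIntegral_congr_fun measurableSet_Ioo hcong, outer_int ht]
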